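/- (Stembridge, case used in proof.) If λ ⊆ ℓ×k is a partition with at least two distinct part sizes and μ ⊆ ℓ×k is a hook (b,1^a) with b ≥ 2, a ≥ 1, and (λ, μ, ℓ×k) is a basic Richardson quadruple, then there exists a partition ν ⊆ ℓ×k with c^ν_{λ,μ} ≥ 2. -/

import Mathlib

/-- `f` is a partition: weakly decreasing and eventually zero (0-indexed parts). -/
def IsPartition (f : ℕ → ℕ) : Prop :=
  (∀ i j, i ≤ j → f j ≤ f i) ∧ ∃ N, ∀ i, N ≤ i → f i = 0

/-- The partition `f` is contained in the `l × k` rectangle. -/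
def InRect (f : ℕ → ℕ) (l k : ℕ) : Prop :=
  IsPartition f ∧ f 0 ≤ k ∧ ∀ i, l ≤ i → f i = 0

/-- Number of nonzero parts of `f`. -/
noncomputable def numParts (f : ℕ → ℕ) : ℕ := {i | f i ≠ 0}.ncard

/-- Number of distinct nonzero part sizes of `f`. -/
noncomputable def numPartSizes (f : ℕ → ℕ) : ℕ := {n | n ≠ 0 ∧ ∃ i, f i = n}.ncard

/-- The cell `c = (i,j)` (0-indexed) lies in the skew shape `ν/λ`. -/
def InSkew (ν lam : ℕ → ℕ) (c : ℕ × ℕ) : Prop := lam c.1 ≤ c.2 ∧ c.2 < ν c.1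

/-- `c'` strictly precedes `c` in the right-to-left, top-to-bottom reading order. -/
def ReadBefore (c' c : ℕ × ℕ) : Prop := c'.1 < c.1 ∨ (c'.1 = c.1 ∧ c.2 < c'.2)

/-- `T` is a Littlewood–Richardson filling of the skew shape `ν/λ` with content `μ`:
a semistandard filling (positive entries, rows weakly increasing, columns strictly
increasing) whose entry `m+1` occurs `μ m` times, and whose right-to-left,
top-to-bottom reading word is a ballot sequence. -/
def IsLRFilling (lam mu ν : ℕ → ℕ) (T : ℕ × ℕ → ℕ) : Prop :=
  (∀ c, ¬ InSkew ν lam c → T c = 0) ∧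
  (∀ c, InSkew ν lam c → 1 ≤ T c) ∧
  (∀ i j j', InSkew ν lam (i, j) → InSkew ν lam (i, j') → j ≤ j' →
      T (i, j) ≤ T (i, j')) ∧
  (∀ i j, InSkew ν lam (i, j) → InSkew ν lam (i + 1, j) → T (i, j) < T (i + 1, j)) ∧
  (∀ m, {c | InSkew ν lam c ∧ T c = m + 1}.Finite ∧
      {c | InSkew ν lam c ∧ T c = m + 1}.ncard = mu m) ∧
  (∀ c, InSkew ν lam c → ∀ m, 1 ≤ m →
      {c' | InSkew ν lam c' ∧ (ReadBefore c' c ∨ c' = c) ∧ T c' = m + 1}.ncard ≤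
      {c' | InSkew ν lam c' ∧ (ReadBefore c' c ∨ c' = c) ∧ T c' = m}.ncard)

/-- The Littlewood–Richardson coefficient `c^ν_{λ,μ}`. -/
noncomputable def lrCoeff (lam mu ν : ℕ → ℕ) : ℕ :=
  Nat.card {T : ℕ × ℕ → ℕ // IsLRFilling lam mu ν T}

/-- Box `c = (i,j)` of the rectangle lies in `λ` placed at the top-left. -/
def InLam (lam : ℕ → ℕ) (c : ℕ × ℕ) : Prop := c.2 < lam c.1

/-- Box `c = (i,j)` of `l × k` lies in `rotate(μ)`, i.e. `μ` rotated 180° and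
placed at the bottom-right. -/
def InRot (mu : ℕ → ℕ) (l k : ℕ) (c : ℕ × ℕ) : Prop := k - mu (l - 1 - c.1) ≤ c.2

/-- The placements of `λ` (top-left) and `rotate(μ)` (bottom-right) in `l × k`
are disjoint. -/
def DisjointPlace (lam mu : ℕ → ℕ) (l k : ℕ) : Prop :=
  ∀ c : ℕ × ℕ, c.1 < l → c.2 < k → ¬ (InLam lam c ∧ InRot mu l k c)

/-- Column `j` of `l × k` is full for `λ ∪ rotate(μ)`. -/
def FullCol (lam mu : ℕ → ℕ) (l k j : ℕ) : Prop :=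
  ∀ i, i < l → (InLam lam (i, j) ∨ InRot mu l k (i, j))

/-- Row `i` of `l × k` is full for `λ ∪ rotate(μ)`. -/
def FullRow (lam mu : ℕ → ℕ) (l k i : ℕ) : Prop :=
  ∀ j, j < k → (InLam lam (i, j) ∨ InRot mu l k (i, j))

/-- `(λ, μ, l × k)` is a basic Richardson quadruple. -/
def BasicRQ (lam mu : ℕ → ℕ) (l k : ℕ) : Prop :=
  InRect lam l k ∧ InRect mu l k ∧ DisjointPlace lam mu l k ∧
  (∀ j, j < k → ¬ FullCol lam mu l k j) ∧ (∀ i, i < l → ¬ FullRow lam mu l k i)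

/-- The rectangle partition `(g^h)`. -/
def rectP (g h : ℕ) : ℕ → ℕ := fun i => if i < h then g else 0

/-- The hook partition `(b, 1^a)`. -/
def hookP (b a : ℕ) : ℕ → ℕ := fun i => if i = 0 then b else if i ≤ a then 1 else 0

namespace Stmt8Proof

lemma rb_trans {x y c : ℕ × ℕ} (h1 : ReadBefore x y) (h2 : ReadBefore y c ∨ y = c) :
    ReadBefore x c := by
  unfold ReadBefore at *
  rcases h2 with h2 | rfl <;> omega

/-- Finiteness of the set of LR fillings. -/
lemma lr_finite (lam mu ν : ℕ → ℕ) (l k N : ℕ)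
    (hνk : ∀ i, ν i ≤ k) (hνl : ∀ i, l ≤ i → ν i = 0)
    (hmu : ∀ m, N ≤ m → mu m = 0) :
    Finite {T : ℕ × ℕ → ℕ // IsLRFilling lam mu ν T} := by
  classical
  have key : ∀ (T : ℕ × ℕ → ℕ), IsLRFilling lam mu ν T → ∀ c, T c ≤ N := by
    intro T hT c
    by_contra hc
    push_neg at hc
    have hsk : InSkew ν lam c := by
      by_contra h
      rw [hT.1 c h] at hc; omega
    have h5 := hT.2.2.2.2.1 (T c - 1)
    have hmem : c ∈ {c' | InSkew ν lam c' ∧ T c' = (T c - 1) + 1} := ⟨hsk, by omega⟩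
    have h0 : {c' | InSkew ν lam c' ∧ T c' = (T c - 1) + 1}.ncard = 0 := by
      rw [h5.2, hmu _ (by omega)]
    rw [Set.ncard_eq_zero h5.1] at h0
    rw [h0] at hmem
    exact hmem
  set G : Finset (ℕ × ℕ) := Finset.range l ×ˢ Finset.range k with hG
  set F : {T : ℕ × ℕ → ℕ // IsLRFilling lam mu ν T} → (G → Fin (N + 1)) :=
    fun T c => ⟨T.1 c.1, Nat.lt_succ_of_le (key T.1 T.2 c.1)⟩ with hF
  have hFinj : Function.Injective F := by
    intro T₁ T₂ h
    apply Subtype.ext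
    funext c
    by_cases hcG : c ∈ G
    · have h2 := congrFun h ⟨c, hcG⟩
      simpa [hF, Fin.ext_iff] using h2
    · have hns : ¬ InSkew ν lam c := by
        intro hsk
        apply hcG
        simp only [hG, Finset.mem_product, Finset.mem_range]
        unfold InSkew at hsk
        constructor
        · by_contra h'
          push_neg at h'
          have := hνl c.1 h'
          omega
        · have := hνk c.1
          omega
      rw [T₁.2.1 c hns, T₂.2.1 c hns]
  exact Finite.of_injective F hFinj

/-- Two distinct fillings give coefficient at least two. -/
lemma two_le_lrCoeff (lam mu ν : ℕ → ℕ) (l k N : ℕ)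
    (hνk : ∀ i, ν i ≤ k) (hνl : ∀ i, l ≤ i → ν i = 0)
    (hmu : ∀ m, N ≤ m → mu m = 0)
    (T₁ T₂ : ℕ × ℕ → ℕ) (h₁ : IsLRFilling lam mu ν T₁) (h₂ : IsLRFilling lam mu ν T₂)
    (hne : T₁ ≠ T₂) : 2 ≤ lrCoeff lam mu ν := by
  classical
  have hfin : Finite {T : ℕ × ℕ → ℕ // IsLRFilling lam mu ν T} :=
    lr_finite lam mu ν l k N hνk hνl hmu
  have hxy : (⟨T₁, h₁⟩ : {T : ℕ × ℕ → ℕ // IsLRFilling lam mu ν T}) ≠ ⟨T₂, h₂⟩ := by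
    intro h
    exact hne (congrArg Subtype.val h)
  have hinj : Function.Injective
      (fun i : Fin 2 => if i = 0 then (⟨T₁, h₁⟩ : {T : ℕ × ℕ → ℕ // IsLRFilling lam mu ν T})
        else ⟨T₂, h₂⟩) := by
    intro i j hij
    fin_cases i <;> fin_cases j <;> simp_all
  have hle := Nat.card_le_card_of_injective _ hinj
  simpa [lrCoeff] using hle



/-- Greedy distribution of `b-1` "ones" into the gaps of `lam`, leaving one spare slot
in each of rows `z₁` and `z₂`. -/
lemma greedy (lam : ℕ → ℕ) (b k l z₁ z₂ : ℕ)
    (hmono : ∀ i j : ℕ, i ≤ j → lam j ≤ lam i)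
    (hz1 : 1 ≤ z₁) (hz12 : z₁ < z₂) (hz2l : z₂ + 1 ≤ l)
    (hd1 : lam z₁ < lam (z₁ - 1)) (hd2 : lam z₂ < lam (z₂ - 1))
    (hl0 : lam 0 + 1 ≤ k) (hb : 2 ≤ b) (hbk : b + 1 ≤ k)
    (hlaml1 : lam (l - 1) = 0) :
    ∃ u : ℕ → ℕ,
      1 ≤ u 0 ∧ lam 0 + u 0 ≤ k ∧
      (∀ i, lam (i + 1) + u (i + 1) ≤ lam i) ∧
      (lam z₁ + u z₁ + 1 ≤ lam (z₁ - 1)) ∧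
      (lam z₂ + u z₂ + 1 ≤ lam (z₂ - 1)) ∧
      (∀ i, l ≤ i → u i = 0) ∧
      (Finset.range l).sum u = b - 1 := by
  classical
  obtain ⟨D, hD⟩ : ∃ D : ℕ → ℕ, ∀ i, D i = (if z₁ ≤ i then 1 else 0) + (if z₂ ≤ i then 1 else 0) :=
    ⟨_, fun _ => rfl⟩
  obtain ⟨K, hKval⟩ : ∃ K : ℕ → ℕ, ∀ i, K i = min (b - 1) (k - lam i - D i) :=
    ⟨_, fun _ => rfl⟩
  obtain ⟨u, hu⟩ : ∃ u : ℕ → ℕ, ∀ i, u i = if i = 0 then K 0 else K i - K (i - 1) :=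
    ⟨_, fun _ => rfl⟩
  have hlam0 : ∀ i, lam i ≤ lam 0 := fun i => hmono 0 i (Nat.zero_le i)
  have hDfacts : ∀ i, (D i = 0 ∧ i < z₁ ∧ i < z₂) ∨ (D i = 1 ∧ z₁ ≤ i ∧ i < z₂) ∨
      (D i = 2 ∧ z₁ ≤ i ∧ z₂ ≤ i) := by
    intro i
    rw [hD i]
    split_ifs <;> omega
  have hgap : ∀ i, (z₁ = i + 1 ∨ z₂ = i + 1) → lam (i + 1) < lam i := by
    intro i h
    rcases h with h | h
    · have h4 := hd1
      rw [h, Nat.add_sub_cancel] at h4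
      exact h4
    · have h4 := hd2
      rw [h, Nat.add_sub_cancel] at h4
      exact h4
  have hKmono : ∀ i, K i ≤ K (i + 1) := by
    intro i
    have h1 : lam (i + 1) ≤ lam i := hmono i (i + 1) (by omega)
    have h2 := hKval i
    have h3 := hKval (i + 1)
    rcases hDfacts i with ⟨hx, hy, hz⟩ | ⟨hx, hy, hz⟩ | ⟨hx, hy, hz⟩ <;>
      rcases hDfacts (i + 1) with ⟨hx', hy', hz'⟩ | ⟨hx', hy', hz'⟩ | ⟨hx', hy', hz'⟩ <;>
      first
        | omega
        | (have := hgap i (by omega); omega)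
  have hgapb : ∀ i, lam (i + 1) + u (i + 1) ≤ lam i := by
    intro i
    have h1 : lam (i + 1) ≤ lam i := hmono i (i + 1) (by omega)
    have h2 := hKval i
    have h3 := hKval (i + 1)
    have h4 : u (i + 1) = K (i + 1) - K i := by
      rw [hu (i + 1), if_neg (Nat.succ_ne_zero i), Nat.add_sub_cancel]
    rcases hDfacts i with ⟨hx, hy, hz⟩ | ⟨hx, hy, hz⟩ | ⟨hx, hy, hz⟩ <;>
      rcases hDfacts (i + 1) with ⟨hx', hy', hz'⟩ | ⟨hx', hy', hz'⟩ | ⟨hx', hy', hz'⟩ <;>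
      first
        | omega
        | (have := hgap i (by omega); omega)
  refine ⟨u, ?_, ?_, hgapb, ?_, ?_, ?_, ?_⟩
  · rw [hu 0, if_pos rfl]
    have h2 := hKval 0
    rcases hDfacts 0 with ⟨hx, _, _⟩ | ⟨hx, hy, _⟩ | ⟨hx, hy, _⟩ <;> omega
  · rw [hu 0, if_pos rfl]
    have h2 := hKval 0
    rcases hDfacts 0 with ⟨hx, _, _⟩ | ⟨hx, hy, _⟩ | ⟨hx, hy, _⟩ <;> omega
  · -- strict bound at z₁
    have h1 : lam z₁ < lam (z₁ - 1) := hd1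
    have h2 : lam (z₁ - 1) ≤ lam 0 := hlam0 _
    have h4 : u z₁ = K z₁ - K (z₁ - 1) := by
      rw [hu z₁, if_neg (by omega : ¬ z₁ = 0)]
    have h5 := hKval z₁
    have h6 := hKval (z₁ - 1)
    rcases hDfacts z₁ with ⟨hx, hy, _⟩ | ⟨hx, _, _⟩ | ⟨hx, _, hz⟩ <;>
      rcases hDfacts (z₁ - 1) with ⟨hx', hy', _⟩ | ⟨hx', hy', _⟩ | ⟨hx', hy', hz'⟩ <;> omega
  · -- strict bound at z₂
    have h1 : lam z₂ < lam (z₂ - 1) := hd2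
    have h2 : lam (z₂ - 1) ≤ lam 0 := hlam0 _
    have h4 : u z₂ = K z₂ - K (z₂ - 1) := by
      rw [hu z₂, if_neg (by omega : ¬ z₂ = 0)]
    have h5 := hKval z₂
    have h6 := hKval (z₂ - 1)
    rcases hDfacts z₂ with ⟨hx, hy, _⟩ | ⟨hx, _, hy⟩ | ⟨hx, _, _⟩ <;>
      rcases hDfacts (z₂ - 1) with ⟨hx', _, hy'⟩ | ⟨hx', _, hy'⟩ | ⟨hx', _, hy'⟩ <;> omega
  · -- vanishing beyond l
    intro i hi
    have h0 : lam i = 0 := by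
      have := hmono (l - 1) i (by omega)
      omega
    have h1 : lam (i - 1) = 0 := by
      have := hmono (l - 1) (i - 1) (by omega)
      omega
    have h4 : u i = K i - K (i - 1) := by
      rw [hu i, if_neg (by omega : ¬ i = 0)]
    have h5 := hKval i
    have h6 := hKval (i - 1)
    rcases hDfacts i with ⟨hx, hy, _⟩ | ⟨hx, _, hy⟩ | ⟨hx, _, _⟩ <;>
      rcases hDfacts (i - 1) with ⟨hx', hy', _⟩ | ⟨hx', _, hy'⟩ | ⟨hx', _, hy'⟩ <;> omega
  · -- total sum
    have key : ∀ n, (Finset.range (n + 1)).sum u = K n := by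
      intro n
      induction n with
      | zero => simp [hu 0]
      | succ n ih =>
        rw [Finset.sum_range_succ, ih]
        have h1 := hKmono n
        have h4 : u (n + 1) = K (n + 1) - K n := by
          rw [hu (n + 1), if_neg (Nat.succ_ne_zero n), Nat.add_sub_cancel]
        omega
    have hl1 : l = (l - 1) + 1 := by omega
    rw [hl1, key]
    have h5 := hKval (l - 1)
    rcases hDfacts (l - 1) with ⟨hx, hy, _⟩ | ⟨hx, _, hy⟩ | ⟨hx, _, _⟩ <;> omega



set_option maxHeartbeats 1000000 in
/-- Master lemma: a row-data description `(w, val, ρ)` satisfying a checklist of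
local conditions yields an LR filling of `ν/λ` with hook content `(b, 1^a)`. -/
lemma filling_lemma (lam : ℕ → ℕ) (b a l k : ℕ) (w val ρ : ℕ → ℕ)
    (hw0 : 1 ≤ w 0) (hval0 : val 0 = 1)
    (hwl : ∀ i, l ≤ i → w i = 0)
    (hdec : ∀ i, lam (i + 1) + w (i + 1) ≤ lam i + w i)
    (hk : lam 0 + w 0 ≤ k)
    (hval1 : ∀ i, 1 ≤ w i → 1 ≤ val i)
    (hover : ∀ i, lam (i + 1) + w (i + 1) ≤ lam i + 1)
    (hstack : ∀ i, lam i < lam (i + 1) + w (i + 1) →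
        (if w i = 1 then val i else 1) < val (i + 1))
    (hρ : ∀ v, 2 ≤ v → v ≤ a + 1 → val (ρ v) = v ∧ 1 ≤ w (ρ v) ∧ 1 ≤ ρ v)
    (hval2 : ∀ i, 2 ≤ val i → i = ρ (val i) ∧ val i ≤ a + 1)
    (hρmono : ∀ v, 2 ≤ v → v ≤ a → ρ v < ρ (v + 1))
    (hcount : ((Finset.range l).sum fun i => w i - if 2 ≤ val i then 1 else 0) = b) :
    IsLRFilling lam (hookP b a) (fun i => lam i + w i)
      (fun c => if lam c.1 ≤ c.2 ∧ c.2 < lam c.1 + w c.1 then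
          (if c.2 = lam c.1 + w c.1 - 1 then val c.1 else 1) else 0) := by
  classical
  set ν : ℕ → ℕ := fun i => lam i + w i with hν
  set T : ℕ × ℕ → ℕ := fun c => if lam c.1 ≤ c.2 ∧ c.2 < lam c.1 + w c.1 then
      (if c.2 = lam c.1 + w c.1 - 1 then val c.1 else 1) else 0 with hT
  have hskew : ∀ c : ℕ × ℕ, InSkew ν lam c ↔ (lam c.1 ≤ c.2 ∧ c.2 < lam c.1 + w c.1) :=
    fun c => Iff.rfl
  have hskew' : ∀ i j : ℕ, InSkew ν lam (i, j) ↔ (lam i ≤ j ∧ j < lam i + w i) :=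
    fun i j => Iff.rfl
  have hanti : ∀ i j : ℕ, i ≤ j → ν j ≤ ν i := fun i j h =>
    (antitone_nat_of_succ_le hdec) h
  have hνk : ∀ i, ν i ≤ k := fun i => le_trans (hanti 0 i (Nat.zero_le i)) hk
  have hTon : ∀ i j, lam i ≤ j → j < lam i + w i →
      T (i, j) = (if j = lam i + w i - 1 then val i else 1) := by
    intro i j h1 h2
    show (if lam i ≤ j ∧ j < lam i + w i then _ else _) = _
    rw [if_pos ⟨h1, h2⟩]
  have hfinskew : {c : ℕ × ℕ | InSkew ν lam c}.Finite := by
    apply Set.Finite.subset ((Finset.range l ×ˢ Finset.range k).finite_toSet)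
    rintro ⟨i, j⟩ hij
    rw [Set.mem_setOf_eq, hskew' i j] at hij
    obtain ⟨h1, h2⟩ := hij
    have h3 := hνk i
    simp only [hν] at h3
    simp only [Finset.coe_product, Set.mem_prod, Finset.mem_coe, Finset.mem_range]
    constructor
    · by_contra h'
      push_neg at h'
      have := hwl i h'
      omega
    · omega
  -- uniqueness of values ≥ 2
  have huniq : ∀ v, 2 ≤ v → ∀ c : ℕ × ℕ, InSkew ν lam c → T c = v →
      v ≤ a + 1 ∧ c = (ρ v, lam (ρ v) + w (ρ v) - 1) := by
    rintro v hv ⟨i, j⟩ hc hTc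
    rw [hskew' i j] at hc
    rw [hTon i j hc.1 hc.2] at hTc
    by_cases hr : j = lam i + w i - 1
    · rw [if_pos hr] at hTc
      obtain ⟨h1, h2⟩ := hval2 i (by omega)
      subst hTc
      refine ⟨h2, ?_⟩
      rw [← h1, hr]
    · rw [if_neg hr] at hTc
      omega
  -- the special cell of value v is in the skew shape and has value v
  have hcell : ∀ v, 2 ≤ v → v ≤ a + 1 →
      InSkew ν lam (ρ v, lam (ρ v) + w (ρ v) - 1) ∧
      T (ρ v, lam (ρ v) + w (ρ v) - 1) = v := by
    intro v h2 h3
    obtain ⟨e1, e2, e3⟩ := hρ v h2 h3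
    have hsk : InSkew ν lam (ρ v, lam (ρ v) + w (ρ v) - 1) := by
      rw [hskew' _ _]
      exact ⟨by omega, by omega⟩
    refine ⟨hsk, ?_⟩
    rw [hTon _ _ (by omega) (by omega), if_pos rfl]
    exact e1
  -- the top-left cell has value 1
  have htop : T (0, lam 0) = 1 := by
    rw [hTon 0 (lam 0) le_rfl (by omega)]
    split_ifs with h
    · exact hval0
    · rfl
  constructor
  · -- zero off the skew shape
    intro c hc
    rw [hskew] at hc
    show (if _ then _ else _) = 0
    rw [if_neg hc]
  constructor
  · -- positivity
    rintro ⟨i, j⟩ hc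
    rw [hskew' i j] at hc
    rw [hTon i j hc.1 hc.2]
    split_ifs with h
    · exact hval1 i (by omega)
    · exact le_rfl
  constructor
  · -- rows weakly increasing
    intro i j j' hc hc' hjj
    rw [hskew' i j] at hc
    rw [hskew' i j'] at hc'
    rw [hTon i j hc.1 hc.2, hTon i j' hc'.1 hc'.2]
    have hw : 1 ≤ w i := by omega
    have hv := hval1 i hw
    split_ifs <;> omega
  constructor
  · -- columns strictly increasing
    intro i j hc hc'
    rw [hskew' i j] at hc
    rw [hskew' (i + 1) j] at hc'
    have hj : j = lam i := by
      have := hover i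
      omega
    have hlt : lam i < lam (i + 1) + w (i + 1) := by omega
    have hst := hstack i hlt
    have hr' : j = lam (i + 1) + w (i + 1) - 1 := by
      have := hover i
      omega
    rw [hTon i j hc.1 hc.2, hTon (i + 1) j hc'.1 hc'.2, if_pos hr']
    by_cases h1 : w i = 1
    · rw [if_pos (by omega : j = lam i + w i - 1)]
      rw [if_pos h1] at hst
      exact hst
    · rw [if_neg (by omega : ¬ j = lam i + w i - 1)]
      rw [if_neg h1] at hst
      exact hst
  constructor
  · -- content
    intro m
    rcases Nat.eq_zero_or_pos m with rfl | hm
    · -- ones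
      have hones : {c : ℕ × ℕ | InSkew ν lam c ∧ T c = 0 + 1} =
          ↑((Finset.range l).biUnion fun i =>
            (Finset.range (w i - if 2 ≤ val i then 1 else 0)).image fun t => (i, lam i + t)) := by
        ext ⟨i, j⟩
        simp only [Set.mem_setOf_eq, Finset.coe_biUnion, Set.mem_iUnion, Finset.mem_coe,
          Finset.mem_biUnion, Finset.mem_range, Finset.mem_image, hskew']
        constructor
        · rintro ⟨⟨h1, h2⟩, hT1⟩
          have hwi : 1 ≤ w i := by omega
          have hil : i < l := by
            by_contra h'
            push_neg at h'
            have := hwl i h'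
            omega
          rw [hTon i j h1 h2] at hT1
          refine ⟨i, hil, j - lam i, ?_, by rw [Nat.add_sub_cancel' h1]⟩
          by_cases hr : j = lam i + w i - 1
          · rw [if_pos hr] at hT1
            have : ¬ 2 ≤ val i := by omega
            rw [if_neg this]
            omega
          · rw [if_neg hr] at hT1
            split_ifs <;> omega
        · rintro ⟨i', hi'l, t, ht, heq⟩
          have hi : i' = i := congrArg Prod.fst heq
          have hj : lam i' + t = j := congrArg Prod.snd heq
          subst hi
          subst hj
          have hwi : 1 ≤ w i' := by split_ifs at ht <;> omega
          have h2 : lam i' + t < lam i' + w i' := by split_ifs at ht <;> omega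
          refine ⟨⟨by omega, h2⟩, ?_⟩
          rw [hTon i' _ (by omega) h2]
          by_cases hr : lam i' + t = lam i' + w i' - 1
          · rw [if_pos hr]
            have hχ : ¬ 2 ≤ val i' := by
              intro hcon
              rw [if_pos hcon] at ht
              omega
            have := hval1 i' hwi
            omega
          · rw [if_neg hr]
      refine ⟨hfinskew.subset (fun c hc => hc.1), ?_⟩
      rw [hones, Set.ncard_coe_finset]
      rw [Finset.card_biUnion (by
        intro x _ y _ hxy
        rw [Function.onFun, Finset.disjoint_left]
        intro c hcx hcy
        simp only [Finset.mem_image, Finset.mem_range] at hcx hcy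
        obtain ⟨t, _, rfl⟩ := hcx
        obtain ⟨t', _, he⟩ := hcy
        exact hxy (congrArg Prod.fst he).symm)]
      have hci : ∀ i ∈ Finset.range l,
          ((Finset.range (w i - if 2 ≤ val i then 1 else 0)).image
            fun t => (i, lam i + t)).card = w i - if 2 ≤ val i then 1 else 0 := by
        intro i _
        rw [Finset.card_image_of_injective _ (by intro u v huv; simpa using huv),
          Finset.card_range]
      rw [Finset.sum_congr rfl hci, hcount]
      simp [hookP]
    · -- higher values
      by_cases hma : m ≤ a
      · have heq : {c : ℕ × ℕ | InSkew ν lam c ∧ T c = m + 1} =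
            {(ρ (m + 1), lam (ρ (m + 1)) + w (ρ (m + 1)) - 1)} := by
          ext c
          simp only [Set.mem_setOf_eq, Set.mem_singleton_iff]
          constructor
          · rintro ⟨hc, hTc⟩
            exact (huniq (m + 1) (by omega) c hc hTc).2
          · rintro rfl
            obtain ⟨h1, h2⟩ := hcell (m + 1) (by omega) (by omega)
            exact ⟨h1, h2⟩
        rw [heq]
        refine ⟨Set.finite_singleton _, ?_⟩
        rw [Set.ncard_singleton]
        simp only [hookP]
        rw [if_neg (by omega : ¬ m = 0), if_pos hma]
      · have heq : {c : ℕ × ℕ | InSkew ν lam c ∧ T c = m + 1} = ∅ := by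
          ext c
          simp only [Set.mem_setOf_eq, Set.mem_empty_iff_false, iff_false, not_and]
          intro hc hTc
          have := (huniq (m + 1) (by omega) c hc hTc).1
          omega
        rw [heq]
        refine ⟨Set.finite_empty, ?_⟩
        rw [Set.ncard_empty]
        simp only [hookP]
        rw [if_neg (by omega : ¬ m = 0), if_neg hma]
  · -- ballot condition
    intro c hc m hm
    by_cases hma : m + 1 ≤ a + 1
    · have hAsub : {c' | InSkew ν lam c' ∧ (ReadBefore c' c ∨ c' = c) ∧ T c' = m + 1} ⊆
          {(ρ (m + 1), lam (ρ (m + 1)) + w (ρ (m + 1)) - 1)} := by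
        rintro x ⟨hx1, _, hx3⟩
        exact (huniq (m + 1) (by omega) x hx1 hx3).2
      have hA1 : {c' | InSkew ν lam c' ∧ (ReadBefore c' c ∨ c' = c) ∧ T c' = m + 1}.ncard ≤ 1 := by
        refine le_trans (Set.ncard_le_ncard hAsub (Set.finite_singleton _)) ?_
        rw [Set.ncard_singleton]
      by_cases hin : ReadBefore (ρ (m + 1), lam (ρ (m + 1)) + w (ρ (m + 1)) - 1) c ∨
          (ρ (m + 1), lam (ρ (m + 1)) + w (ρ (m + 1)) - 1) = c
      · -- the cell of value m+1 is read before c; find an earlier cell of value m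
        have hBfin : {c' | InSkew ν lam c' ∧ (ReadBefore c' c ∨ c' = c) ∧ T c' = m}.Finite :=
          hfinskew.subset (fun x hx => hx.1)
        have hBne : {c' | InSkew ν lam c' ∧ (ReadBefore c' c ∨ c' = c) ∧ T c' = m}.Nonempty := by
          rcases Nat.lt_or_ge m 2 with hm2 | hm2
          · -- m = 1 : use the top cell (0, lam 0)
            have hm1 : m = 1 := by omega
            refine ⟨(0, lam 0), ?_, ?_, ?_⟩
            · rw [hskew' _ _]
              omega
            · left
              refine rb_trans ?_ hin
              unfold ReadBefore
              left
              exact (hρ (m + 1) (by omega) hma).2.2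
            · rw [htop, hm1]
          · -- m ≥ 2 : use the special cell of value m
            obtain ⟨h1, h2⟩ := hcell m hm2 (by omega)
            refine ⟨(ρ m, lam (ρ m) + w (ρ m) - 1), h1, ?_, h2⟩
            left
            refine rb_trans ?_ hin
            unfold ReadBefore
            left
            exact hρmono m hm2 (by omega)
        calc {c' | InSkew ν lam c' ∧ (ReadBefore c' c ∨ c' = c) ∧ T c' = m + 1}.ncard ≤ 1 := hA1
          _ ≤ {c' | InSkew ν lam c' ∧ (ReadBefore c' c ∨ c' = c) ∧ T c' = m}.ncard :=
            (Set.ncard_pos hBfin).mpr hBne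
      · have hA0 : {c' | InSkew ν lam c' ∧ (ReadBefore c' c ∨ c' = c) ∧ T c' = m + 1} = ∅ := by
          ext x
          simp only [Set.mem_setOf_eq, Set.mem_empty_iff_false, iff_false, not_and]
          intro hx1 hx2
          intro hx3
          apply hin
          have := (huniq (m + 1) (by omega) x hx1 hx3).2
          rw [← this]
          exact hx2
        rw [hA0, Set.ncard_empty]
        exact Nat.zero_le _
    · -- values above a+1 do not occur
      have hA0 : {c' | InSkew ν lam c' ∧ (ReadBefore c' c ∨ c' = c) ∧ T c' = m + 1} = ∅ := by
        ext x
        simp only [Set.mem_setOf_eq, Set.mem_empty_iff_false, iff_false, not_and]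
        intro hx1 _ hx3
        have := (huniq (m + 1) (by omega) x hx1 hx3).1
        omega
      rw [hA0, Set.ncard_empty]
      exact Nat.zero_le _


end Stmt8Proof

set_option maxHeartbeats 2000000

/-- If `λ ⊆ l × k` has at least two distinct part sizes, `μ = (b, 1^a)` is a hook
with `b ≥ 2`, `a ≥ 1`, and `(λ, μ, l × k)` is a basic Richardson quadruple, then
some LR coefficient is at least 2. -/
theorem stmt8 (lam : ℕ → ℕ) (b a l k : ℕ)
    (hsize : 2 ≤ numPartSizes lam) (hb : 2 ≤ b) (ha : 1 ≤ a)
    (hbasic : BasicRQ lam (hookP b a) l k) :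
    ∃ ν : ℕ → ℕ, InRect ν l k ∧ 2 ≤ lrCoeff lam (hookP b a) ν := by
  classical
  obtain ⟨⟨⟨hmono, -⟩, hl0k, hlaml⟩, hmurect, hdisj, hnocol, hnorow⟩ := hbasic
  -- μ fits in the rectangle
  have hbk0 : b ≤ k := by
    have := hmurect.2.1
    simpa [hookP] using this
  have hal : a + 1 ≤ l := by
    by_contra h
    push_neg at h
    have h2 := hmurect.2.2 a (by omega)
    simp only [hookP] at h2
    rw [if_neg (by omega : ¬ a = 0), if_pos le_rfl] at h2
    omega
  have hk1 : 1 ≤ k := by omega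
  -- no full column k-1 gives a + 2 ≤ l
  have hal2 : a + 2 ≤ l := by
    have hcol := hnocol (k - 1) (by omega)
    unfold FullCol at hcol
    push_neg at hcol
    obtain ⟨i, hil, hn1, hn2⟩ := hcol
    unfold InRot at hn2
    simp only [hookP] at hn2
    by_cases h0 : l - 1 - i = 0
    · rw [if_pos h0] at hn2
      omega
    · rw [if_neg h0] at hn2
      by_cases h1 : l - 1 - i ≤ a
      · rw [if_pos h1] at hn2
        omega
      · omega
  -- no full last row gives b + 1 ≤ k
  have hbk : b + 1 ≤ k := by
    have hrow := hnorow (l - 1) (by omega)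
    unfold FullRow at hrow
    push_neg at hrow
    obtain ⟨j, hjk, hn1, hn2⟩ := hrow
    unfold InRot at hn2
    have e : l - 1 - (l - 1, j).1 = 0 := by simp
    rw [e] at hn2
    simp [hookP] at hn2
    omega
  -- no full column 0 gives lam (l-1) = 0
  have hlam_last : lam (l - 1) = 0 := by
    have hcol := hnocol 0 (by omega)
    unfold FullCol at hcol
    push_neg at hcol
    obtain ⟨i, hil, hn1, hn2⟩ := hcol
    unfold InLam at hn1
    simp only [not_lt, Nat.le_zero] at hn1
    have := hmono i (l - 1) (by omega)
    omega
  -- no full row 0 gives lam 0 + 1 ≤ k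
  have hlam0k : lam 0 + 1 ≤ k := by
    have hrow := hnorow 0 (by omega)
    unfold FullRow at hrow
    push_neg at hrow
    obtain ⟨j, hjk, hn1, hn2⟩ := hrow
    unfold InLam at hn1
    simp only [not_lt] at hn1
    omega
  -- two distinct nonzero part sizes give a row with 1 ≤ lam i < lam 0
  have hSfin : {n | n ≠ 0 ∧ ∃ i, lam i = n}.Finite := by
    by_contra hinf
    have h0 : {n | n ≠ 0 ∧ ∃ i, lam i = n}.ncard = 0 := Set.Infinite.ncard hinf
    unfold numPartSizes at hsize
    omega
  have h2lt : 1 < {n | n ≠ 0 ∧ ∃ i, lam i = n}.ncard := by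
    unfold numPartSizes at hsize
    omega
  obtain ⟨x, hx, y, hy, hxy⟩ := (Set.one_lt_ncard hSfin).mp h2lt
  obtain ⟨hx0, ix, hix⟩ := hx
  obtain ⟨hy0, iy, hiy⟩ := hy
  have hione : ∃ i, 1 ≤ lam i ∧ lam i < lam 0 := by
    rcases Nat.lt_or_ge x y with h | h
    · refine ⟨ix, by omega, ?_⟩
      have := hmono 0 iy (Nat.zero_le iy)
      omega
    · refine ⟨iy, by omega, ?_⟩
      have := hmono 0 ix (Nat.zero_le ix)
      omega
  obtain ⟨i₀, hi₀1, hi₀2⟩ := hione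
  -- the number of parts m
  have hex0 : ∃ i, lam i = 0 := ⟨l - 1, hlam_last⟩
  obtain ⟨m, hm0, hmmin, hml⟩ : ∃ m, lam m = 0 ∧ (∀ i, i < m → lam i ≠ 0) ∧ m ≤ l - 1 :=
    ⟨Nat.find hex0, Nat.find_spec hex0, fun i hi => Nat.find_min hex0 hi,
      Nat.find_min' hex0 hlam_last⟩
  have hm1 : 1 ≤ m := by
    by_contra h
    have hm00 : m = 0 := by omega
    rw [hm00] at hm0
    have := hmono 0 i₀ (Nat.zero_le i₀)
    omega
  have hmd : lam m < lam (m - 1) := by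
    have := hmmin (m - 1) (by omega)
    omega
  -- the first descent r
  have hexr : ∃ i, lam i < lam 0 := ⟨i₀, hi₀2⟩
  obtain ⟨r, hr, hrmin, hri₀⟩ : ∃ r, lam r < lam 0 ∧ (∀ i, i < r → ¬ lam i < lam 0) ∧ r ≤ i₀ :=
    ⟨Nat.find hexr, Nat.find_spec hexr, fun i hi => Nat.find_min hexr hi,
      Nat.find_min' hexr hi₀2⟩
  have hrconst : ∀ i, i < r → lam i = lam 0 := by
    intro i hi
    have h1 := hrmin i hi
    have h2 := hmono 0 i (Nat.zero_le i)
    omega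
  have hr1 : 1 ≤ r := by
    by_contra h
    have hr00 : r = 0 := by omega
    rw [hr00] at hr
    omega
  have hrpos : 1 ≤ lam r := by
    have h1 := hmono r i₀ hri₀
    omega
  have hrm : r < m := by
    by_contra h
    push_neg at h
    have := hmono m r h
    omega
  have hrd : lam r < lam (r - 1) := by
    have := hrconst (r - 1) (by omega)
    omega
  -- the case split
  by_cases hW : lam (m - 1) < lam (a - 1)
  · -- Case W1 : there is a descent in [a, m-1]
    have ham : a + 1 ≤ m := by
      by_contra h
      push_neg at h
      have := hmono (m - 1) (a - 1) (by omega)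
      omega
    have hexd : ∃ d, a ≤ d ∧ lam d < lam (a - 1) := ⟨m - 1, by omega, hW⟩
    obtain ⟨d, ⟨hda, hdlt⟩, hdmin, hdm'⟩ :
        ∃ d, (a ≤ d ∧ lam d < lam (a - 1)) ∧ (∀ e, e < d → ¬ (a ≤ e ∧ lam e < lam (a - 1))) ∧
          d ≤ m - 1 := by
      exact ⟨Nat.find hexd, Nat.find_spec hexd, fun e he => Nat.find_min hexd he,
        Nat.find_min' hexd ⟨by omega, hW⟩⟩
    have hdm : d + 1 ≤ m := by omega
    have hd1e : lam (d - 1) = lam (a - 1) := by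
      rcases Nat.eq_or_lt_of_le hda with h | h
      · rw [show d - 1 = a - 1 from by omega]
      · have h1 := hdmin (d - 1) (by omega)
        have h2 : lam (a - 1) ≤ lam (d - 1) := by
          by_contra hcon
          push_neg at hcon
          exact h1 ⟨by omega, hcon⟩
        have h3 : lam (d - 1) ≤ lam (a - 1) := hmono (a - 1) (d - 1) (by omega)
        omega
    have hdd : lam d < lam (d - 1) := by omega
    have hd1 : 1 ≤ d := by omega
    -- greedy ones
    obtain ⟨u, hu0, hu0k, hug, huz1, huz2, hul, husum⟩ :=
      Stmt8Proof.greedy lam b k l d m hmono hd1 (by omega) (by omega) hdd (by omega) hlam0k hb hbk hlam_last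
    -- the shape
    obtain ⟨w, hwv⟩ : ∃ w : ℕ → ℕ,
        ∀ i, w i = u i + (if (1 ≤ i ∧ i ≤ a - 1) ∨ i = d ∨ i = m then 1 else 0) :=
      ⟨_, fun _ => rfl⟩
    have hw_pos : ∀ i, ((1 ≤ i ∧ i ≤ a - 1) ∨ i = d ∨ i = m) → 1 ≤ w i := by
      intro i h
      rw [hwv i, if_pos h]
      omega
    have hw0 : 1 ≤ w 0 := by
      rw [hwv 0, if_neg (by omega)]
      omega
    have hwl : ∀ i, l ≤ i → w i = 0 := by
      intro i hi
      rw [hwv i, if_neg (by omega), hul i hi]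
    have hdec : ∀ i, lam (i + 1) + w (i + 1) ≤ lam i + w i := by
      intro i
      have hg := hug i
      rw [hwv (i + 1), hwv i]
      by_cases hS1 : (1 ≤ i + 1 ∧ i + 1 ≤ a - 1) ∨ i + 1 = d ∨ i + 1 = m
      · rw [if_pos hS1]
        rcases hS1 with h | h | h
        · -- i+1 in the chain block
          by_cases hi0 : i = 0
          · subst hi0
            rw [if_neg (by omega)]
            omega
          · rw [if_pos (by omega : (1 ≤ i ∧ i ≤ a - 1) ∨ i = d ∨ i = m)]
            omega
        · -- i+1 = d : strict slack
          rw [← h] at huz1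
          rw [Nat.add_sub_cancel] at huz1
          split_ifs <;> omega
        · -- i+1 = m : strict slack
          rw [← h] at huz2
          rw [Nat.add_sub_cancel] at huz2
          split_ifs <;> omega
      · rw [if_neg hS1]
        split_ifs <;> omega
    have hover : ∀ i, lam (i + 1) + w (i + 1) ≤ lam i + 1 := by
      intro i
      have hg := hug i
      rw [hwv (i + 1)]
      split_ifs <;> omega
    have hk' : lam 0 + w 0 ≤ k := by
      rw [hwv 0, if_neg (by omega)]
      omega
    -- the two value assignments
    obtain ⟨v₁, hv₁⟩ : ∃ v₁ : ℕ → ℕ, ∀ i, v₁ i = if w i = 0 then 0 else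
        if 1 ≤ i ∧ i ≤ a - 1 then i + 1 else if i = d then a + 1 else 1 :=
      ⟨_, fun _ => rfl⟩
    obtain ⟨v₂, hv₂⟩ : ∃ v₂ : ℕ → ℕ, ∀ i, v₂ i = if w i = 0 then 0 else
        if 1 ≤ i ∧ i ≤ a - 1 then i + 1 else if i = m then a + 1 else 1 :=
      ⟨_, fun _ => rfl⟩
    obtain ⟨p₁, hp₁⟩ : ∃ p₁ : ℕ → ℕ, ∀ v, p₁ v = if v ≤ a then v - 1 else d :=
      ⟨_, fun _ => rfl⟩
    obtain ⟨p₂, hp₂⟩ : ∃ p₂ : ℕ → ℕ, ∀ v, p₂ v = if v ≤ a then v - 1 else m :=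
      ⟨_, fun _ => rfl⟩
    -- evaluations
    have hv₁chain : ∀ i, 1 ≤ i → i ≤ a - 1 → v₁ i = i + 1 := by
      intro i h1 h2
      rw [hv₁ i, if_neg (by have := hw_pos i (Or.inl ⟨h1, h2⟩); omega), if_pos ⟨h1, h2⟩]
    have hv₂chain : ∀ i, 1 ≤ i → i ≤ a - 1 → v₂ i = i + 1 := by
      intro i h1 h2
      rw [hv₂ i, if_neg (by have := hw_pos i (Or.inl ⟨h1, h2⟩); omega), if_pos ⟨h1, h2⟩]
    have hv₁d : v₁ d = a + 1 := by
      rw [hv₁ d, if_neg (by have := hw_pos d (Or.inr (Or.inl rfl)); omega),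
        if_neg (by omega), if_pos rfl]
    have hv₂d : v₂ d = 1 := by
      rw [hv₂ d, if_neg (by have := hw_pos d (Or.inr (Or.inl rfl)); omega),
        if_neg (by omega), if_neg (by omega)]
    have hv₁m : v₁ m = 1 := by
      rw [hv₁ m, if_neg (by have := hw_pos m (Or.inr (Or.inr rfl)); omega),
        if_neg (by omega), if_neg (by omega)]
    have hv₂m : v₂ m = a + 1 := by
      rw [hv₂ m, if_neg (by have := hw_pos m (Or.inr (Or.inr rfl)); omega),
        if_neg (by omega), if_pos rfl]
    have hv₁0 : v₁ 0 = 1 := by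
      rw [hv₁ 0, if_neg (by omega), if_neg (by omega), if_neg (by omega)]
    have hv₂0 : v₂ 0 = 1 := by
      rw [hv₂ 0, if_neg (by omega), if_neg (by omega), if_neg (by omega)]
    -- checklist for the first filling
    have hval1₁ : ∀ i, 1 ≤ w i → 1 ≤ v₁ i := by
      intro i h
      rw [hv₁ i, if_neg (by omega)]
      split_ifs <;> omega
    have hval1₂ : ∀ i, 1 ≤ w i → 1 ≤ v₂ i := by
      intro i h
      rw [hv₂ i, if_neg (by omega)]
      split_ifs <;> omega
    have hstack_pre : ∀ i, lam i < lam (i + 1) + w (i + 1) →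
        (1 ≤ i + 1 ∧ i + 1 ≤ a - 1) ∧ lam (i + 1) + u (i + 1) = lam i := by
      intro i hlt
      have hg := hug i
      rw [hwv (i + 1)] at hlt
      by_cases hS1 : (1 ≤ i + 1 ∧ i + 1 ≤ a - 1) ∨ i + 1 = d ∨ i + 1 = m
      · rcases hS1 with h | h | h
        · rw [if_pos (Or.inl h)] at hlt
          exact ⟨h, by omega⟩
        · exfalso
          rw [← h] at huz1
          rw [Nat.add_sub_cancel] at huz1
          rw [if_pos (Or.inr (Or.inl h))] at hlt
          omega
        · exfalso
          rw [← h] at huz2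
          rw [Nat.add_sub_cancel] at huz2
          rw [if_pos (Or.inr (Or.inr h))] at hlt
          omega
      · exfalso
        rw [if_neg hS1] at hlt
        omega
    have hstack₁ : ∀ i, lam i < lam (i + 1) + w (i + 1) →
        (if w i = 1 then v₁ i else 1) < v₁ (i + 1) := by
      intro i hlt
      obtain ⟨⟨h1, h2⟩, -⟩ := hstack_pre i hlt
      rw [hv₁chain (i + 1) h1 h2]
      by_cases hi0 : i = 0
      · subst hi0
        rw [hv₁0]
        split_ifs <;> omega
      · rw [hv₁chain i (by omega) (by omega)]
        split_ifs <;> omega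
    have hstack₂ : ∀ i, lam i < lam (i + 1) + w (i + 1) →
        (if w i = 1 then v₂ i else 1) < v₂ (i + 1) := by
      intro i hlt
      obtain ⟨⟨h1, h2⟩, -⟩ := hstack_pre i hlt
      rw [hv₂chain (i + 1) h1 h2]
      by_cases hi0 : i = 0
      · subst hi0
        rw [hv₂0]
        split_ifs <;> omega
      · rw [hv₂chain i (by omega) (by omega)]
        split_ifs <;> omega
    have hρ₁ : ∀ v, 2 ≤ v → v ≤ a + 1 → v₁ (p₁ v) = v ∧ 1 ≤ w (p₁ v) ∧ 1 ≤ p₁ v := by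
      intro v h2 h3
      rw [hp₁ v]
      by_cases hva : v ≤ a
      · rw [if_pos hva]
        refine ⟨?_, hw_pos _ (Or.inl ⟨by omega, by omega⟩), by omega⟩
        rw [hv₁chain (v - 1) (by omega) (by omega)]
        omega
      · rw [if_neg hva]
        exact ⟨by rw [hv₁d]; omega, hw_pos _ (Or.inr (Or.inl rfl)), by omega⟩
    have hρ₂ : ∀ v, 2 ≤ v → v ≤ a + 1 → v₂ (p₂ v) = v ∧ 1 ≤ w (p₂ v) ∧ 1 ≤ p₂ v := by
      intro v h2 h3
      rw [hp₂ v]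
      by_cases hva : v ≤ a
      · rw [if_pos hva]
        refine ⟨?_, hw_pos _ (Or.inl ⟨by omega, by omega⟩), by omega⟩
        rw [hv₂chain (v - 1) (by omega) (by omega)]
        omega
      · rw [if_neg hva]
        exact ⟨by rw [hv₂m]; omega, hw_pos _ (Or.inr (Or.inr rfl)), by omega⟩
    have hval2₁ : ∀ i, 2 ≤ v₁ i → i = p₁ (v₁ i) ∧ v₁ i ≤ a + 1 := by
      intro i h2
      by_cases hwi : w i = 0
      · rw [hv₁ i, if_pos hwi] at h2
        omega
      · by_cases hc : 1 ≤ i ∧ i ≤ a - 1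
        · have he : v₁ i = i + 1 := hv₁chain i hc.1 hc.2
          rw [he, hp₁ (i + 1), if_pos (by omega)]
          omega
        · by_cases hd' : i = d
          · subst hd'
            rw [hv₁d, hp₁ (a + 1), if_neg (by omega)]
            omega
          · rw [hv₁ i, if_neg hwi, if_neg hc, if_neg hd'] at h2
            omega
    have hval2₂ : ∀ i, 2 ≤ v₂ i → i = p₂ (v₂ i) ∧ v₂ i ≤ a + 1 := by
      intro i h2
      by_cases hwi : w i = 0
      · rw [hv₂ i, if_pos hwi] at h2
        omega
      · by_cases hc : 1 ≤ i ∧ i ≤ a - 1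
        · have he : v₂ i = i + 1 := hv₂chain i hc.1 hc.2
          rw [he, hp₂ (i + 1), if_pos (by omega)]
          omega
        · by_cases hm' : i = m
          · subst hm'
            rw [hv₂m, hp₂ (a + 1), if_neg (by omega)]
            omega
          · rw [hv₂ i, if_neg hwi, if_neg hc, if_neg hm'] at h2
            omega
    have hρmono₁ : ∀ v, 2 ≤ v → v ≤ a → p₁ v < p₁ (v + 1) := by
      intro v h2 h3
      rw [hp₁ v, hp₁ (v + 1), if_pos h3]
      split_ifs <;> omega
    have hρmono₂ : ∀ v, 2 ≤ v → v ≤ a → p₂ v < p₂ (v + 1) := by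
      intro v h2 h3
      rw [hp₂ v, hp₂ (v + 1), if_pos h3]
      split_ifs <;> omega
    have hcount₁ : ((Finset.range l).sum fun i => w i - if 2 ≤ v₁ i then 1 else 0) = b := by
      have hpt : ∀ i ∈ Finset.range l,
          w i - (if 2 ≤ v₁ i then 1 else 0) = u i + (if i = m then 1 else 0) := by
        intro i _
        by_cases hc : 1 ≤ i ∧ i ≤ a - 1
        · rw [hv₁chain i hc.1 hc.2, hwv i, if_pos (Or.inl hc), if_pos (by omega),
            if_neg (by omega)]
          omega
        · by_cases hd' : i = d
          · rw [hd']
            rw [hv₁d, hwv d, if_pos (Or.inr (Or.inl rfl)), if_pos (by omega),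
              if_neg (by omega)]
            omega
          · by_cases hm' : i = m
            · rw [hm']
              rw [hv₁m, hwv m, if_pos (Or.inr (Or.inr rfl)), if_neg (by omega), if_pos rfl]
              omega
            · have hw_eq : w i = u i := by
                have h9 := hwv i
                rw [if_neg (by tauto)] at h9
                omega
              rw [hwv i, if_neg (by tauto)]
              by_cases hwi : u i = 0
              · rw [hv₁ i, if_pos (by omega : w i = 0)]
                rw [if_neg (by omega : ¬ (2:ℕ) ≤ 0), if_neg hm']
                omega
              · rw [hv₁ i, if_neg (by omega : ¬ w i = 0), if_neg hc, if_neg hd']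
                rw [if_neg (by omega : ¬ (2:ℕ) ≤ 1), if_neg hm']
                omega
      rw [Finset.sum_congr rfl hpt, Finset.sum_add_distrib, husum,
        Finset.sum_ite_eq' (Finset.range l) m (fun _ => 1),
        if_pos (Finset.mem_range.mpr (by omega))]
      omega
    have hcount₂ : ((Finset.range l).sum fun i => w i - if 2 ≤ v₂ i then 1 else 0) = b := by
      have hpt : ∀ i ∈ Finset.range l,
          w i - (if 2 ≤ v₂ i then 1 else 0) = u i + (if i = d then 1 else 0) := by
        intro i _
        by_cases hc : 1 ≤ i ∧ i ≤ a - 1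
        · rw [hv₂chain i hc.1 hc.2, hwv i, if_pos (Or.inl hc), if_pos (by omega),
            if_neg (by omega)]
          omega
        · by_cases hm' : i = m
          · rw [hm']
            rw [hv₂m, hwv m, if_pos (Or.inr (Or.inr rfl)), if_pos (by omega),
              if_neg (by omega)]
            omega
          · by_cases hd' : i = d
            · rw [hd']
              rw [hv₂d, hwv d, if_pos (Or.inr (Or.inl rfl)), if_neg (by omega), if_pos rfl]
              omega
            · have hw_eq : w i = u i := by
                have h9 := hwv i
                rw [if_neg (by tauto)] at h9
                omega
              rw [hwv i, if_neg (by tauto)]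
              by_cases hwi : u i = 0
              · rw [hv₂ i, if_pos (by omega : w i = 0)]
                rw [if_neg (by omega : ¬ (2:ℕ) ≤ 0), if_neg hd']
                omega
              · rw [hv₂ i, if_neg (by omega : ¬ w i = 0), if_neg hc, if_neg hm']
                rw [if_neg (by omega : ¬ (2:ℕ) ≤ 1), if_neg hd']
                omega
      rw [Finset.sum_congr rfl hpt, Finset.sum_add_distrib, husum,
        Finset.sum_ite_eq' (Finset.range l) d (fun _ => 1),
        if_pos (Finset.mem_range.mpr (by omega))]
      omega
    -- the two fillings
    have hF₁ := Stmt8Proof.filling_lemma lam b a l k w v₁ p₁ hw0 hv₁0 hwl hdec hk' hval1₁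
      hover hstack₁ hρ₁ hval2₁ hρmono₁ hcount₁
    have hF₂ := Stmt8Proof.filling_lemma lam b a l k w v₂ p₂ hw0 hv₂0 hwl hdec hk' hval1₂
      hover hstack₂ hρ₂ hval2₂ hρmono₂ hcount₂
    have hνl : ∀ i, l ≤ i → lam i + w i = 0 := by
      intro i hi
      rw [hlaml i hi, hwl i hi]
    have hanti : ∀ i j : ℕ, i ≤ j → lam j + w j ≤ lam i + w i := by
      intro i j hij
      exact antitone_nat_of_succ_le (f := fun i => lam i + w i) hdec hij
    refine ⟨fun i => lam i + w i,
      ⟨⟨fun i j hij => hanti i j hij, ⟨l, hνl⟩⟩, hk', hνl⟩, ?_⟩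
    apply Stmt8Proof.two_le_lrCoeff lam (hookP b a) _ l k (a + 1)
      (fun i => le_trans (hanti 0 i (Nat.zero_le i)) hk') hνl
      (by
        intro m' hm'
        simp only [hookP]
        rw [if_neg (by omega), if_neg (by omega)])
      _ _ hF₁ hF₂
    intro hEq
    have h1 := congrFun hEq (m, lam m + w m - 1)
    have hwm : 1 ≤ w m := hw_pos m (Or.inr (Or.inr rfl))
    have e1 : (if lam m ≤ lam m + w m - 1 ∧ lam m + w m - 1 < lam m + w m then
        (if lam m + w m - 1 = lam m + w m - 1 then v₁ m else 1) else 0) = v₁ m := by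
      rw [if_pos ⟨by omega, by omega⟩, if_pos rfl]
    have e2 : (if lam m ≤ lam m + w m - 1 ∧ lam m + w m - 1 < lam m + w m then
        (if lam m + w m - 1 = lam m + w m - 1 then v₂ m else 1) else 0) = v₂ m := by
      rw [if_pos ⟨by omega, by omega⟩, if_pos rfl]
    have h2 : v₁ m = v₂ m := by
      rw [← e1, ← e2]
      exact h1
    rw [hv₁m, hv₂m] at h2
    omega
  · -- Case W2 : lam (a-1) ≤ lam (m-1)
    have hW2 : lam (a - 1) ≤ lam (m - 1) := by omega
    have hra : r + 1 ≤ a := by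
      by_contra h
      push_neg at h
      have h1 : lam (a - 1) = lam 0 := hrconst (a - 1) (by omega)
      have h2 : lam (m - 1) ≤ lam r := hmono r (m - 1) (by omega)
      omega
    obtain ⟨M, hM⟩ : ∃ M, M = max m (a + 1) := ⟨_, rfl⟩
    have hMl : M + 1 ≤ l := by omega
    have hmem_m : (1 ≤ m ∧ m ≤ a) ∨ m = M := by omega
    have hmem_r : (1 ≤ r ∧ r ≤ a) ∨ r = M := Or.inl ⟨hr1, by omega⟩
    -- greedy ones
    obtain ⟨u, hu0, hu0k, hug, huz1, huz2, hul, husum⟩ :=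
      Stmt8Proof.greedy lam b k l r m hmono hr1 hrm (by omega) hrd (by omega) hlam0k hb hbk
        hlam_last
    -- the shape
    obtain ⟨w, hwv⟩ : ∃ w : ℕ → ℕ,
        ∀ i, w i = u i + (if (1 ≤ i ∧ i ≤ a) ∨ i = M then 1 else 0) :=
      ⟨_, fun _ => rfl⟩
    have hw_pos : ∀ i, ((1 ≤ i ∧ i ≤ a) ∨ i = M) → 1 ≤ w i := by
      intro i h
      rw [hwv i, if_pos h]
      omega
    have hw0 : 1 ≤ w 0 := by
      rw [hwv 0, if_neg (by omega)]
      omega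
    have hwl : ∀ i, l ≤ i → w i = 0 := by
      intro i hi
      rw [hwv i, if_neg (by omega), hul i hi]
    have hk' : lam 0 + w 0 ≤ k := by
      rw [hwv 0, if_neg (by omega)]
      omega
    have hdec : ∀ i, lam (i + 1) + w (i + 1) ≤ lam i + w i := by
      intro i
      have hg := hug i
      rw [hwv (i + 1), hwv i]
      by_cases hir : i + 1 = r
      · have h9 := huz1
        rw [← hir, Nat.add_sub_cancel] at h9
        split_ifs <;> omega
      · by_cases him : i + 1 = m
        · have h9 := huz2
          rw [← him, Nat.add_sub_cancel] at h9
          split_ifs <;> omega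
        · by_cases hS1 : (1 ≤ i + 1 ∧ i + 1 ≤ a) ∨ i + 1 = M
          · rw [if_pos hS1]
            by_cases hi0 : i = 0
            · subst hi0
              rw [if_neg (by omega)]
              omega
            · rw [if_pos (by
                rcases hS1 with ⟨h1, h2⟩ | h
                · exact Or.inl ⟨by omega, by omega⟩
                · exact Or.inl ⟨by omega, by omega⟩)]
              omega
          · rw [if_neg hS1]
            split_ifs <;> omega
    have hover : ∀ i, lam (i + 1) + w (i + 1) ≤ lam i + 1 := by
      intro i
      have hg := hug i
      rw [hwv (i + 1)]
      split_ifs <;> omega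
    -- the two value assignments
    obtain ⟨v₁, hv₁⟩ : ∃ v₁ : ℕ → ℕ, ∀ i, v₁ i = if w i = 0 then 0 else
        if (1 ≤ i ∧ i ≤ a) ∨ i = M then
          (if i = m then 1 else if i < m then i + 1 else if i ≤ a then i else a + 1)
        else 1 := ⟨_, fun _ => rfl⟩
    obtain ⟨v₂, hv₂⟩ : ∃ v₂ : ℕ → ℕ, ∀ i, v₂ i = if w i = 0 then 0 else
        if (1 ≤ i ∧ i ≤ a) ∨ i = M then
          (if i = r then 1 else if i < r then i + 1 else if i ≤ a then i else a + 1)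
        else 1 := ⟨_, fun _ => rfl⟩
    obtain ⟨p₁, hp₁⟩ : ∃ p₁ : ℕ → ℕ,
        ∀ v, p₁ v = if v ≤ m then v - 1 else if v ≤ a then v else M :=
      ⟨_, fun _ => rfl⟩
    obtain ⟨p₂, hp₂⟩ : ∃ p₂ : ℕ → ℕ,
        ∀ v, p₂ v = if v ≤ r then v - 1 else if v ≤ a then v else M :=
      ⟨_, fun _ => rfl⟩
    have hv₁S : ∀ i, ((1 ≤ i ∧ i ≤ a) ∨ i = M) → v₁ i =
        (if i = m then 1 else if i < m then i + 1 else if i ≤ a then i else a + 1) := by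
      intro i h
      rw [hv₁ i, if_neg (by have := hw_pos i h; omega), if_pos h]
    have hv₂S : ∀ i, ((1 ≤ i ∧ i ≤ a) ∨ i = M) → v₂ i =
        (if i = r then 1 else if i < r then i + 1 else if i ≤ a then i else a + 1) := by
      intro i h
      rw [hv₂ i, if_neg (by have := hw_pos i h; omega), if_pos h]
    have hv₁0 : v₁ 0 = 1 := by
      rw [hv₁ 0, if_neg (by omega), if_neg (by omega)]
    have hv₂0 : v₂ 0 = 1 := by
      rw [hv₂ 0, if_neg (by omega), if_neg (by omega)]
    have hval1₁ : ∀ i, 1 ≤ w i → 1 ≤ v₁ i := by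
      intro i h
      rw [hv₁ i, if_neg (by omega)]
      split_ifs <;> omega
    have hval1₂ : ∀ i, 1 ≤ w i → 1 ≤ v₂ i := by
      intro i h
      rw [hv₂ i, if_neg (by omega)]
      split_ifs <;> omega
    have hstack_pre : ∀ i, lam i < lam (i + 1) + w (i + 1) →
        (((1 ≤ i + 1 ∧ i + 1 ≤ a) ∨ i + 1 = M) ∧ i + 1 ≠ r ∧ i + 1 ≠ m ∧
          lam (i + 1) + u (i + 1) = lam i) := by
      intro i hlt
      have hg := hug i
      rw [hwv (i + 1)] at hlt
      by_cases hS1 : (1 ≤ i + 1 ∧ i + 1 ≤ a) ∨ i + 1 = M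
      · rw [if_pos hS1] at hlt
        refine ⟨hS1, ?_, ?_, by omega⟩
        · intro h
          have h9 := huz1
          rw [← h, Nat.add_sub_cancel] at h9
          omega
        · intro h
          have h9 := huz2
          rw [← h, Nat.add_sub_cancel] at h9
          omega
      · rw [if_neg hS1] at hlt
        omega
    have hstack₁ : ∀ i, lam i < lam (i + 1) + w (i + 1) →
        (if w i = 1 then v₁ i else 1) < v₁ (i + 1) := by
      intro i hlt
      obtain ⟨hS1, hnr, hnm, heq⟩ := hstack_pre i hlt
      rw [hv₁S (i + 1) hS1]
      by_cases hi0 : i = 0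
      · subst hi0
        rw [hv₁0]
        split_ifs <;> omega
      · have hiS : (1 ≤ i ∧ i ≤ a) ∨ i = M := by
          rcases hS1 with ⟨h1, h2⟩ | h
          · exact Or.inl ⟨by omega, by omega⟩
          · exact Or.inl ⟨by omega, by omega⟩
        rw [hv₁S i hiS]
        split_ifs <;> omega
    have hstack₂ : ∀ i, lam i < lam (i + 1) + w (i + 1) →
        (if w i = 1 then v₂ i else 1) < v₂ (i + 1) := by
      intro i hlt
      obtain ⟨hS1, hnr, hnm, heq⟩ := hstack_pre i hlt
      rw [hv₂S (i + 1) hS1]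
      by_cases hi0 : i = 0
      · subst hi0
        rw [hv₂0]
        split_ifs <;> omega
      · have hiS : (1 ≤ i ∧ i ≤ a) ∨ i = M := by
          rcases hS1 with ⟨h1, h2⟩ | h
          · exact Or.inl ⟨by omega, by omega⟩
          · exact Or.inl ⟨by omega, by omega⟩
        rw [hv₂S i hiS]
        split_ifs <;> omega
    have hρ₁ : ∀ v, 2 ≤ v → v ≤ a + 1 → v₁ (p₁ v) = v ∧ 1 ≤ w (p₁ v) ∧ 1 ≤ p₁ v := by
      intro v h2 h3
      rw [hp₁ v]
      by_cases hvm : v ≤ m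
      · rw [if_pos hvm]
        have hS : (1 ≤ v - 1 ∧ v - 1 ≤ a) ∨ v - 1 = M := Or.inl ⟨by omega, by omega⟩
        refine ⟨?_, hw_pos _ hS, by omega⟩
        rw [hv₁S _ hS, if_neg (by omega), if_pos (by omega)]
        omega
      · rw [if_neg hvm]
        by_cases hva : v ≤ a
        · rw [if_pos hva]
          have hS : (1 ≤ v ∧ v ≤ a) ∨ v = M := Or.inl ⟨by omega, hva⟩
          refine ⟨?_, hw_pos _ hS, by omega⟩
          rw [hv₁S _ hS, if_neg (by omega), if_neg (by omega), if_pos hva]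
        · rw [if_neg hva]
          have hS : (1 ≤ M ∧ M ≤ a) ∨ M = M := Or.inr rfl
          refine ⟨?_, hw_pos _ hS, by omega⟩
          rw [hv₁S _ hS, if_neg (by omega), if_neg (by omega), if_neg (by omega)]
          omega
    have hρ₂ : ∀ v, 2 ≤ v → v ≤ a + 1 → v₂ (p₂ v) = v ∧ 1 ≤ w (p₂ v) ∧ 1 ≤ p₂ v := by
      intro v h2 h3
      rw [hp₂ v]
      by_cases hvr : v ≤ r
      · rw [if_pos hvr]
        have hS : (1 ≤ v - 1 ∧ v - 1 ≤ a) ∨ v - 1 = M := Or.inl ⟨by omega, by omega⟩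
        refine ⟨?_, hw_pos _ hS, by omega⟩
        rw [hv₂S _ hS, if_neg (by omega), if_pos (by omega)]
        omega
      · rw [if_neg hvr]
        by_cases hva : v ≤ a
        · rw [if_pos hva]
          have hS : (1 ≤ v ∧ v ≤ a) ∨ v = M := Or.inl ⟨by omega, hva⟩
          refine ⟨?_, hw_pos _ hS, by omega⟩
          rw [hv₂S _ hS, if_neg (by omega), if_neg (by omega), if_pos hva]
        · rw [if_neg hva]
          have hS : (1 ≤ M ∧ M ≤ a) ∨ M = M := Or.inr rfl
          refine ⟨?_, hw_pos _ hS, by omega⟩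
          rw [hv₂S _ hS, if_neg (by omega), if_neg (by omega), if_neg (by omega)]
          omega
    have hval2₁ : ∀ i, 2 ≤ v₁ i → i = p₁ (v₁ i) ∧ v₁ i ≤ a + 1 := by
      intro i h2
      by_cases hwi : w i = 0
      · rw [hv₁ i, if_pos hwi] at h2
        omega
      · by_cases hS : (1 ≤ i ∧ i ≤ a) ∨ i = M
        · rw [hv₁S i hS] at h2 ⊢
          by_cases him : i = m
          · rw [if_pos him] at h2
            omega
          · rw [if_neg him] at h2 ⊢
            by_cases hilt : i < m
            · rw [if_pos hilt] at h2 ⊢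
              rw [hp₁ (i + 1), if_pos (by omega)]
              constructor
              · omega
              · rcases hS with ⟨-, h⟩ | h <;> omega
            · rw [if_neg hilt] at h2 ⊢
              by_cases hia : i ≤ a
              · rw [if_pos hia] at h2 ⊢
                rw [hp₁ i, if_neg (by omega), if_pos hia]
                omega
              · rw [if_neg hia] at h2 ⊢
                rw [hp₁ (a + 1), if_neg (by omega), if_neg (by omega)]
                rcases hS with ⟨-, h⟩ | h
                · omega
                · omega
        · rw [hv₁ i, if_neg hwi, if_neg hS] at h2
          omega
    have hval2₂ : ∀ i, 2 ≤ v₂ i → i = p₂ (v₂ i) ∧ v₂ i ≤ a + 1 := by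
      intro i h2
      by_cases hwi : w i = 0
      · rw [hv₂ i, if_pos hwi] at h2
        omega
      · by_cases hS : (1 ≤ i ∧ i ≤ a) ∨ i = M
        · rw [hv₂S i hS] at h2 ⊢
          by_cases hir : i = r
          · rw [if_pos hir] at h2
            omega
          · rw [if_neg hir] at h2 ⊢
            by_cases hilt : i < r
            · rw [if_pos hilt] at h2 ⊢
              rw [hp₂ (i + 1), if_pos (by omega)]
              constructor
              · omega
              · rcases hS with ⟨-, h⟩ | h <;> omega
            · rw [if_neg hilt] at h2 ⊢
              by_cases hia : i ≤ a
              · rw [if_pos hia] at h2 ⊢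
                rw [hp₂ i, if_neg (by omega), if_pos hia]
                omega
              · rw [if_neg hia] at h2 ⊢
                rw [hp₂ (a + 1), if_neg (by omega), if_neg (by omega)]
                rcases hS with ⟨-, h⟩ | h
                · omega
                · omega
        · rw [hv₂ i, if_neg hwi, if_neg hS] at h2
          omega
    have hρmono₁ : ∀ v, 2 ≤ v → v ≤ a → p₁ v < p₁ (v + 1) := by
      intro v h2 h3
      rw [hp₁ v, hp₁ (v + 1)]
      split_ifs <;> omega
    have hρmono₂ : ∀ v, 2 ≤ v → v ≤ a → p₂ v < p₂ (v + 1) := by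
      intro v h2 h3
      rw [hp₂ v, hp₂ (v + 1)]
      split_ifs <;> omega
    have hcount₁ : ((Finset.range l).sum fun i => w i - if 2 ≤ v₁ i then 1 else 0) = b := by
      have hpt : ∀ i ∈ Finset.range l,
          w i - (if 2 ≤ v₁ i then 1 else 0) = u i + (if i = m then 1 else 0) := by
        intro i _
        by_cases hS : (1 ≤ i ∧ i ≤ a) ∨ i = M
        · rw [hwv i, if_pos hS]
          by_cases him : i = m
          · have h5 : v₁ i = 1 := by
              rw [hv₁S i hS, if_pos him]
            rw [h5, if_neg (by omega), if_pos him]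
            omega
          · have h5 : 2 ≤ v₁ i := by
              rw [hv₁S i hS, if_neg him]
              split_ifs <;> omega
            rw [if_pos h5, if_neg him]
            omega
        · have hw_eq : w i = u i := by
            have h9 := hwv i
            rw [if_neg hS] at h9
            omega
          rw [hwv i, if_neg hS]
          by_cases hwi : u i = 0
          · rw [hv₁ i, if_pos (by omega : w i = 0)]
            rw [if_neg (by omega : ¬ (2:ℕ) ≤ 0), if_neg (by omega : ¬ i = m)]
            omega
          · rw [hv₁ i, if_neg (by omega : ¬ w i = 0), if_neg hS]
            rw [if_neg (by omega : ¬ (2:ℕ) ≤ 1), if_neg (by omega : ¬ i = m)]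
            omega
      rw [Finset.sum_congr rfl hpt, Finset.sum_add_distrib, husum,
        Finset.sum_ite_eq' (Finset.range l) m (fun _ => 1),
        if_pos (Finset.mem_range.mpr (by omega))]
      omega
    have hcount₂ : ((Finset.range l).sum fun i => w i - if 2 ≤ v₂ i then 1 else 0) = b := by
      have hpt : ∀ i ∈ Finset.range l,
          w i - (if 2 ≤ v₂ i then 1 else 0) = u i + (if i = r then 1 else 0) := by
        intro i _
        by_cases hS : (1 ≤ i ∧ i ≤ a) ∨ i = M
        · rw [hwv i, if_pos hS]
          by_cases hir : i = r
          · have h5 : v₂ i = 1 := by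
              rw [hv₂S i hS, if_pos hir]
            rw [h5, if_neg (by omega), if_pos hir]
            omega
          · have h5 : 2 ≤ v₂ i := by
              rw [hv₂S i hS, if_neg hir]
              split_ifs <;> omega
            rw [if_pos h5, if_neg hir]
            omega
        · have hw_eq : w i = u i := by
            have h9 := hwv i
            rw [if_neg hS] at h9
            omega
          rw [hwv i, if_neg hS]
          by_cases hwi : u i = 0
          · rw [hv₂ i, if_pos (by omega : w i = 0)]
            rw [if_neg (by omega : ¬ (2:ℕ) ≤ 0), if_neg (by omega : ¬ i = r)]
            omega
          · rw [hv₂ i, if_neg (by omega : ¬ w i = 0), if_neg hS]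
            rw [if_neg (by omega : ¬ (2:ℕ) ≤ 1), if_neg (by omega : ¬ i = r)]
            omega
      rw [Finset.sum_congr rfl hpt, Finset.sum_add_distrib, husum,
        Finset.sum_ite_eq' (Finset.range l) r (fun _ => 1),
        if_pos (Finset.mem_range.mpr (by omega))]
      omega
    have hF₁ := Stmt8Proof.filling_lemma lam b a l k w v₁ p₁ hw0 hv₁0 hwl hdec hk' hval1₁
      hover hstack₁ hρ₁ hval2₁ hρmono₁ hcount₁
    have hF₂ := Stmt8Proof.filling_lemma lam b a l k w v₂ p₂ hw0 hv₂0 hwl hdec hk' hval1₂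
      hover hstack₂ hρ₂ hval2₂ hρmono₂ hcount₂
    have hνl : ∀ i, l ≤ i → lam i + w i = 0 := by
      intro i hi
      rw [hlaml i hi, hwl i hi]
    have hanti : ∀ i j : ℕ, i ≤ j → lam j + w j ≤ lam i + w i := by
      intro i j hij
      exact antitone_nat_of_succ_le (f := fun i => lam i + w i) hdec hij
    refine ⟨fun i => lam i + w i,
      ⟨⟨fun i j hij => hanti i j hij, ⟨l, hνl⟩⟩, hk', hνl⟩, ?_⟩
    apply Stmt8Proof.two_le_lrCoeff lam (hookP b a) _ l k (a + 1)
      (fun i => le_trans (hanti 0 i (Nat.zero_le i)) hk') hνl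
      (by
        intro m' hm'
        simp only [hookP]
        rw [if_neg (by omega), if_neg (by omega)])
      _ _ hF₁ hF₂
    intro hEq
    have h1 := congrFun hEq (m, lam m + w m - 1)
    have hwm : 1 ≤ w m := hw_pos m hmem_m
    have e1 : (if lam m ≤ lam m + w m - 1 ∧ lam m + w m - 1 < lam m + w m then
        (if lam m + w m - 1 = lam m + w m - 1 then v₁ m else 1) else 0) = v₁ m := by
      rw [if_pos ⟨by omega, by omega⟩, if_pos rfl]
    have e2 : (if lam m ≤ lam m + w m - 1 ∧ lam m + w m - 1 < lam m + w m then
        (if lam m + w m - 1 = lam m + w m - 1 then v₂ m else 1) else 0) = v₂ m := by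
      rw [if_pos ⟨by omega, by omega⟩, if_pos rfl]
    have h2 : v₁ m = v₂ m := by
      rw [← e1, ← e2]
      exact h1
    have h3 : v₁ m = 1 := by
      rw [hv₁S m hmem_m, if_pos rfl]
    have h4 : 2 ≤ v₂ m := by
      rw [hv₂S m hmem_m]
      split_ifs <;> omega
    omega
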